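/- Let Φ be proper convex lsc, B β-cocoercive, 0 < μ < 4β, x a solution of ẋ(t) + x(t) − prox_{μΦ}(x(t) − μB(x(t))) = 0, and z with 0 ∈ ∂Φ(z) + Bz. Then for all t, 0 ≥ (1/(2μ))(d/dt)‖x(t) − z‖² + (1/μ)‖ẋ(t)‖² + ⟨B(x(t)) − Bz, x(t) − z⟩ + ⟨ẋ(t), B(x(t)) − Bz⟩; consequently, with α = μ/4 + β, (1/(2μ))(d/dt)‖x(t) − z‖² + ((4β − μ)/(μ(μ + 4β)))‖ẋ(t)‖² + (1/8)(4β − μ)‖B(x(t)) − Bz‖² ≤ 0, so t ↦ ‖x(t) − z‖ is nonincreasing. -/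

import Mathlib

set_option maxHeartbeats 1000000


open scoped RealInnerProductSpace
open Set

/-- `v` belongs to the convex subdifferential of `Φ` at `x`. -/
def InSubdiff {H : Type*} [NormedAddCommGroup H] [InnerProductSpace ℝ H]
    (Φ : H → EReal) (x v : H) : Prop :=
  ∀ y : H, Φ x + ((⟪v, y - x⟫ : ℝ) : EReal) ≤ Φ y

/-- Lyapunov inequalities for the proximal-gradient dynamic: for any solution
`z` of `0 ∈ ∂Φ(z) + Bz` and any `t ≥ 0`, writing `d` for the derivative of
`‖x(·) - z‖²` at `t`, one has
`0 ≥ (1/(2μ)) d + (1/μ)‖ẋ‖² + ⟨Bx - Bz, x - z⟩ + ⟨ẋ, Bx - Bz⟩` and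
`(1/(2μ)) d + ((4β-μ)/(μ(μ+4β)))‖ẋ‖² + (1/8)(4β-μ)‖Bx - Bz‖² ≤ 0`;
consequently `t ↦ ‖x(t) - z‖` is nonincreasing on `[0, ∞)`. -/
theorem proximal_gradient_lyapunov
    {H : Type*} [NormedAddCommGroup H] [InnerProductSpace ℝ H] [CompleteSpace H]
    (Φ : H → EReal)
    (hproper : (∀ x, Φ x ≠ ⊥) ∧ ∃ x, Φ x ≠ ⊤)
    (hconvex : ∀ x y : H, ∀ a b : ℝ, 0 ≤ a → 0 ≤ b → a + b = 1 →
      Φ (a • x + b • y) ≤ (a : EReal) * Φ x + (b : EReal) * Φ y)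
    (hlsc : LowerSemicontinuous Φ)
    (β : ℝ) (hβ : 0 < β) (B : H → H)
    (hcoco : ∀ x y : H, β * ‖B x - B y‖ ^ 2 ≤ ⟪B x - B y, x - y⟫)
    (μ : ℝ) (hμ0 : 0 < μ) (hμβ : μ < 4 * β)
    (prox : H → H)
    (hprox : ∀ w : H, InSubdiff Φ (prox w) ((1 / μ) • (w - prox w)))
    (x x' : ℝ → H)
    (hderiv : ∀ t : ℝ, HasDerivAt x (x' t) t)
    (heq : ∀ t : ℝ, 0 ≤ t → x' t + x t - prox (x t - μ • B (x t)) = 0)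
    (z : H) (hz : InSubdiff Φ z (-B z)) :
    (∀ t : ℝ, 0 ≤ t → ∀ d : ℝ,
      HasDerivAt (fun s => ‖x s - z‖ ^ 2) d t →
        (0 ≥ (1 / (2 * μ)) * d + (1 / μ) * ‖x' t‖ ^ 2
            + ⟪B (x t) - B z, x t - z⟫ + ⟪x' t, B (x t) - B z⟫) ∧
        ((1 / (2 * μ)) * d + ((4 * β - μ) / (μ * (μ + 4 * β))) * ‖x' t‖ ^ 2
            + (1 / 8) * (4 * β - μ) * ‖B (x t) - B z‖ ^ 2 ≤ 0)) ∧
      AntitoneOn (fun t => ‖x t - z‖) (Ici (0 : ℝ)) := by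
  obtain ⟨hbot, y₀, hy₀⟩ := hproper
  have hμ : μ ≠ 0 := ne_of_gt hμ0
  have h4β : (0:ℝ) < μ + 4 * β := by linarith
  -- Φ z is finite
  have hzt : Φ z ≠ ⊤ := by
    intro h
    have h1 := hz y₀
    rw [h, EReal.top_add_coe] at h1
    exact hy₀ (top_le_iff.mp h1)
  -- derivative of the squared distance
  have hf : ∀ t : ℝ, HasDerivAt (fun s => ‖x s - z‖ ^ 2)
      (2 * ⟪x' t, x t - z⟫) t := by
    intro t
    have h1 : HasDerivAt (fun s => x s - z) (x' t) t := (hderiv t).sub_const z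
    have h2 := h1.inner ℝ h1
    simp only [real_inner_self_eq_norm_sq] at h2
    refine h2.congr_deriv ?_
    rw [real_inner_comm (x t - z) (x' t)]
    ring
  -- the key inequality coming from monotonicity of the subdifferential
  have hkey : ∀ t : ℝ, 0 ≤ t →
      ‖x' t‖ ^ 2 + ⟪x' t, x t - z⟫ + μ * ⟪x' t, B (x t) - B z⟫
        + μ * ⟪B (x t) - B z, x t - z⟫ ≤ 0 := by
    intro t ht
    set w : H := x t - μ • B (x t) with hw
    have hp : prox w = x' t + x t := by
      have h := heq t ht
      rw [sub_eq_zero] at h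
      exact h.symm
    -- finiteness of Φ at prox w
    have hpt : Φ (prox w) ≠ ⊤ := by
      intro h
      have h1 := hprox w z
      rw [h, EReal.top_add_coe] at h1
      exact hzt (top_le_iff.mp h1)
    -- lift the two subgradient inequalities to ℝ
    have hca : ((Φ (prox w)).toReal : EReal) = Φ (prox w) :=
      EReal.coe_toReal hpt (hbot _)
    have hcc : ((Φ z).toReal : EReal) = Φ z := EReal.coe_toReal hzt (hbot _)
    have h1 := hprox w z
    have h2 := hz (prox w)
    rw [← hca, ← hcc, ← EReal.coe_add] at h1 h2
    rw [EReal.coe_le_coe_iff] at h1 h2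
    have hmono : ⟪(1 / μ) • (w - prox w), z - prox w⟫
        + ⟪-B z, prox w - z⟫ ≤ 0 := by linarith
    rw [real_inner_smul_left, inner_neg_left] at hmono
    have hmono2 : 0 ≤ ⟪w - prox w, prox w - z⟫ + μ * ⟪B z, prox w - z⟫ := by
      have e : ⟪w - prox w, z - prox w⟫ = -⟪w - prox w, prox w - z⟫ := by
        rw [← inner_neg_right]; congr 1; abel
      rw [e] at hmono
      have h3 : 0 ≤ (1 / μ) * ⟪w - prox w, prox w - z⟫ + ⟪B z, prox w - z⟫ := by
        linarith
      have h4 := mul_le_mul_of_nonneg_left h3 hμ0.le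
      calc (0:ℝ) = μ * 0 := by ring
        _ ≤ μ * ((1 / μ) * ⟪w - prox w, prox w - z⟫ + ⟪B z, prox w - z⟫) := h4
        _ = ⟪w - prox w, prox w - z⟫ + μ * ⟪B z, prox w - z⟫ := by
            field_simp
    rw [hp, hw] at hmono2
    have e2 : ⟪x t - μ • B (x t) - (x' t + x t), x' t + x t - z⟫
        + μ * ⟪B z, x' t + x t - z⟫
        = -(‖x' t‖ ^ 2 + ⟪x' t, x t - z⟫ + μ * ⟪x' t, B (x t) - B z⟫
            + μ * ⟪B (x t) - B z, x t - z⟫) := by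
      simp only [inner_sub_left, inner_sub_right, inner_add_left, inner_add_right,
        real_inner_smul_left, real_inner_smul_right, real_inner_self_eq_norm_sq]
      rw [real_inner_comm (x' t) (B (x t)), real_inner_comm (x' t) (B z)]
      ring
    rw [e2] at hmono2
    linarith
  -- the main pointwise statement
  have hmain : ∀ t : ℝ, 0 ≤ t → ∀ d : ℝ,
      HasDerivAt (fun s => ‖x s - z‖ ^ 2) d t →
        (0 ≥ (1 / (2 * μ)) * d + (1 / μ) * ‖x' t‖ ^ 2
            + ⟪B (x t) - B z, x t - z⟫ + ⟪x' t, B (x t) - B z⟫) ∧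
        ((1 / (2 * μ)) * d + ((4 * β - μ) / (μ * (μ + 4 * β))) * ‖x' t‖ ^ 2
            + (1 / 8) * (4 * β - μ) * ‖B (x t) - B z‖ ^ 2 ≤ 0) := by
    intro t ht d hd
    have hdval : d = 2 * ⟪x' t, x t - z⟫ := hd.unique (hf t)
    set W : ℝ := ‖x' t‖ ^ 2 with hW
    set G : ℝ := ‖B (x t) - B z‖ ^ 2 with hG
    set P : ℝ := ⟪B (x t) - B z, x t - z⟫ with hPdef
    set Q : ℝ := ⟪x' t, B (x t) - B z⟫ with hQdef
    set S : ℝ := ⟪x' t, x t - z⟫ with hSdef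
    have hk : W + S + μ * Q + μ * P ≤ 0 := hkey t ht
    have hc : β * G ≤ P := hcoco (x t) z
    -- first inequality
    have goal1 : (1 / (2 * μ)) * d + (1 / μ) * W + P + Q
        = (W + S + μ * Q + μ * P) / μ := by
      rw [hdval]; field_simp; ring
    have first : 0 ≥ (1 / (2 * μ)) * d + (1 / μ) * W + P + Q := by
      rw [goal1]
      exact div_nonpos_of_nonpos_of_nonneg hk hμ0.le
    refine ⟨first, ?_⟩
    -- second inequality
    have hq : (0:ℝ) ≤ ‖x' t + (β + μ / 4) • (B (x t) - B z)‖ ^ 2 := by positivity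
    have hq' : 0 ≤ W + (2 * β + μ / 2) * Q + (β + μ / 4) ^ 2 * G := by
      rw [norm_add_sq_real, real_inner_smul_right, norm_smul, mul_pow,
        Real.norm_eq_abs, sq_abs] at hq
      rw [← hW, ← hG, ← hQdef] at hq
      nlinarith [hq]
    have hWnn : (0:ℝ) ≤ W := by positivity
    have hGnn : (0:ℝ) ≤ G := by positivity
    have A1 : (μ + 4 * β) * (2 * W + 2 * S + 2 * μ * Q + 2 * μ * P) ≤ 0 := by
      nlinarith [hk]
    have A2 : (0:ℝ) ≤ 4 * μ * (W + (2 * β + μ / 2) * Q + (β + μ / 4) ^ 2 * G) :=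
      mul_nonneg (by linarith) hq'
    have A3 : 2 * μ * (μ + 4 * β) * (β * G) ≤ 2 * μ * (μ + 4 * β) * P :=
      mul_le_mul_of_nonneg_left hc (by positivity)
    have key3 : (μ + 4 * β) * d + 2 * (4 * β - μ) * W
        + μ * (μ + 4 * β) * (4 * β - μ) / 4 * G ≤ 0 := by
      rw [hdval]
      nlinarith [A1, A2, A3]
    have e3 : (1 / (2 * μ)) * d + ((4 * β - μ) / (μ * (μ + 4 * β))) * W
        + (1 / 8) * (4 * β - μ) * G
        = ((μ + 4 * β) * d + 2 * (4 * β - μ) * W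
            + μ * (μ + 4 * β) * (4 * β - μ) / 4 * G) / (2 * μ * (μ + 4 * β)) := by
      field_simp
      ring
    rw [e3]
    exact div_nonpos_of_nonpos_of_nonneg key3 (by positivity)
  refine ⟨hmain, ?_⟩
  -- antitonicity of the norm
  have hdiff : Differentiable ℝ (fun s => ‖x s - z‖ ^ 2) :=
    fun t => (hf t).differentiableAt
  have hderneg : ∀ t ∈ interior (Ici (0:ℝ)),
      deriv (fun s => ‖x s - z‖ ^ 2) t ≤ 0 := by
    intro t ht
    rw [interior_Ici] at ht
    have ht0 : (0:ℝ) ≤ t := le_of_lt ht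
    have h2 := (hmain t ht0 _ (hf t)).2
    rw [(hf t).deriv]
    have hWnn : (0:ℝ) ≤ ‖x' t‖ ^ 2 := by positivity
    have hGnn : (0:ℝ) ≤ ‖B (x t) - B z‖ ^ 2 := by positivity
    have hc1 : (0:ℝ) < (4 * β - μ) / (μ * (μ + 4 * β)) :=
      div_pos (by linarith) (by positivity)
    have hc2 : (0:ℝ) < (1:ℝ) / 8 * (4 * β - μ) := by linarith
    have hd0 : (1 / (2 * μ)) * (2 * ⟪x' t, x t - z⟫) ≤ 0 := by
      linarith [h2, mul_nonneg hc1.le hWnn, mul_nonneg hc2.le hGnn]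
    have := mul_le_mul_of_nonneg_left hd0 (le_of_lt (by positivity : (0:ℝ) < 2 * μ))
    calc (2 : ℝ) * ⟪x' t, x t - z⟫
        = 2 * μ * ((1 / (2 * μ)) * (2 * ⟪x' t, x t - z⟫)) := by field_simp
      _ ≤ 2 * μ * 0 := this
      _ = 0 := by ring
  have hA : AntitoneOn (fun s => ‖x s - z‖ ^ 2) (Ici (0:ℝ)) :=
    antitoneOn_of_deriv_nonpos (convex_Ici 0) hdiff.continuous.continuousOn
      hdiff.differentiableOn hderneg
  intro a ha b hb hab
  have h := hA ha hb hab
  simp only at h ⊢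
  nlinarith [norm_nonneg (x a - z), norm_nonneg (x b - z), h]
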